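/- arXiv:2603.26501 — 4 statements merged into one kernel-verified Lean document; each statement's English description precedes it below -/
import Mathlib

section
/- Let k be a field of characteristic p > 0, let K = k((t)) be the field of formal Laurent series over k, and let K(x) be the rational function field in one variable over K. Then there is no u ∈ K(x) with u^p − u = t/x + t/(x−1). -/
open HahnSeries

/-- Let `k` be a field of characteristic `p > 0`, `K = k((t))` the Laurent series field,
and `K(x)` the rational function field over `K`. Then the Artin–Schreier equation
`u ^ p - u = t/x + t/(x-1)` has no solution `u ∈ K(x)`. -/
theorem no_artinSchreier_root_ratFunc_sum (p : ℕ) (hp : p.Prime)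
    (k : Type*) [Field k] [CharP k p] :
    ¬ ∃ u : RatFunc (LaurentSeries k),
      u ^ p - u =
        RatFunc.C (HahnSeries.single 1 1 : LaurentSeries k) / RatFunc.X +
        RatFunc.C (HahnSeries.single 1 1 : LaurentSeries k) / (RatFunc.X - 1) := by
  rintro ⟨u, hu⟩
  set t : LaurentSeries k := HahnSeries.single 1 1 with htdef
  have ht : t ≠ 0 := HahnSeries.single_ne_zero one_ne_zero
  set v := HahnSeries.addVal ℤ (LaurentSeries k) with hv
  have H := congrArg (fun f : RatFunc (LaurentSeries k) =>
    (f : LaurentSeries (LaurentSeries k))) hu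
  have hCc : ∀ c : LaurentSeries k, ((RatFunc.C c : RatFunc (LaurentSeries k)) :
      LaurentSeries (LaurentSeries k)) = HahnSeries.C c := by
    intro c
    rw [← RatFunc.algebraMap_C]
    erw [← RatFunc.coe_coe, Polynomial.coe_C, PowerSeries.coe_C]
  simp only [map_sub, map_pow, map_add, map_div₀,
    hCc, RatFunc.coe_X, map_one] at H
  have vC : v (HahnSeries.C t) = ((0 : ℤ) : WithTop ℤ) := by
    rw [hv, HahnSeries.addVal_apply, HahnSeries.C_apply, HahnSeries.orderTop_single ht]
  have vX : v (HahnSeries.single (1 : ℤ) (1 : LaurentSeries k))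
      = ((1 : ℤ) : WithTop ℤ) := by
    rw [hv, HahnSeries.addVal_apply, HahnSeries.orderTop_single one_ne_zero]
  have vXm1 : v (HahnSeries.single (1 : ℤ) (1 : LaurentSeries k) - 1)
      = ((0 : ℤ) : WithTop ℤ) := by
    rw [sub_eq_add_neg, v.map_add_of_distinct_val, v.map_neg, v.map_one, vX]
    · simp
    · rw [v.map_neg, v.map_one, vX]
      simp
  have hX1 : (HahnSeries.single (1 : ℤ) (1 : LaurentSeries k) - 1) ≠ 0 := by
    intro h
    rw [h, v.map_zero] at vXm1
    exact (by simp : ((⊤ : WithTop ℤ)) ≠ ((0 : ℤ) : WithTop ℤ)) vXm1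
  have hXne : (HahnSeries.single (1 : ℤ) (1 : LaurentSeries k)) ≠ 0 :=
    HahnSeries.single_ne_zero one_ne_zero
  have hCne : (HahnSeries.C t : LaurentSeries (LaurentSeries k)) ≠ 0 := by
    intro hc
    rw [hc, v.map_zero] at vC
    exact (by simp : ((⊤ : WithTop ℤ)) ≠ ((0 : ℤ) : WithTop ℤ)) vC
  have v1 : v (HahnSeries.C t / HahnSeries.single (1 : ℤ) (1 : LaurentSeries k))
      = ((-1 : ℤ) : WithTop ℤ) := by
    have h := v.map_mul (HahnSeries.C t / HahnSeries.single (1 : ℤ) (1 : LaurentSeries k))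
      (HahnSeries.single (1 : ℤ) (1 : LaurentSeries k))
    have hcan : HahnSeries.C t / HahnSeries.single (1 : ℤ) (1 : LaurentSeries k)
        * HahnSeries.single (1 : ℤ) (1 : LaurentSeries k) = HahnSeries.C t :=
      div_mul_cancel₀ (G₀ := LaurentSeries (LaurentSeries k)) _ hXne
    rw [hcan, vC, vX] at h
    have hd1 : (HahnSeries.C t / HahnSeries.single (1 : ℤ) (1 : LaurentSeries k))
        ≠ (0 : HahnSeries ℤ (LaurentSeries k)) :=
      div_ne_zero (G₀ := LaurentSeries (LaurentSeries k)) hCne hXne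
    have ha := HahnSeries.addVal_apply_of_ne hd1
    rw [← hv] at ha
    rw [ha] at h ⊢
    rw [← WithTop.coe_add, WithTop.coe_inj] at h
    rw [WithTop.coe_inj]
    omega
  have v2 : v (HahnSeries.C t / (HahnSeries.single (1 : ℤ) (1 : LaurentSeries k) - 1))
      = ((0 : ℤ) : WithTop ℤ) := by
    have h := v.map_mul
      (HahnSeries.C t / (HahnSeries.single (1 : ℤ) (1 : LaurentSeries k) - 1))
      (HahnSeries.single (1 : ℤ) (1 : LaurentSeries k) - 1)
    have hcan : HahnSeries.C t / (HahnSeries.single (1 : ℤ) (1 : LaurentSeries k) - 1)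
        * (HahnSeries.single (1 : ℤ) (1 : LaurentSeries k) - 1) = HahnSeries.C t :=
      div_mul_cancel₀ (G₀ := LaurentSeries (LaurentSeries k)) _ hX1
    rw [hcan, vC, vXm1] at h
    have hd2 : (HahnSeries.C t / (HahnSeries.single (1 : ℤ) (1 : LaurentSeries k) - 1))
        ≠ (0 : HahnSeries ℤ (LaurentSeries k)) :=
      div_ne_zero (G₀ := LaurentSeries (LaurentSeries k)) hCne hX1
    have ha := HahnSeries.addVal_apply_of_ne hd2
    rw [← hv] at ha
    rw [ha] at h ⊢
    rw [← WithTop.coe_add, WithTop.coe_inj] at h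
    rw [WithTop.coe_inj]
    omega
  have vRHS : v (HahnSeries.C t / HahnSeries.single (1 : ℤ) (1 : LaurentSeries k)
      + HahnSeries.C t / (HahnSeries.single (1 : ℤ) (1 : LaurentSeries k) - 1))
      = ((-1 : ℤ) : WithTop ℤ) := by
    rw [v.map_add_of_distinct_val (by rw [v1, v2]; simp), v1, v2]
    exact min_eq_left (by exact_mod_cast (by norm_num : (-1 : ℤ) ≤ 0))
  rw [← H] at vRHS
  set U : LaurentSeries (LaurentSeries k) := (u : LaurentSeries (LaurentSeries k)) with hU
  rcases eq_or_ne U 0 with h0 | h0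
  · rw [h0, zero_pow hp.ne_zero, sub_zero, v.map_zero] at vRHS
    exact WithTop.top_ne_coe vRHS
  have hm : v U = ((U.order : ℤ) : WithTop ℤ) := by
    have := HahnSeries.addVal_apply_of_ne h0
    rw [← hv] at this
    exact this
  set m : ℤ := U.order with hmdef
  have vpow : v (U ^ p) = ((p * m : ℤ) : WithTop ℤ) := by
    rw [v.map_pow, hm, ← WithTop.coe_nsmul]
    norm_num
  rcases lt_or_ge m 0 with hneg | hpos
  · have h2p : (2 : ℤ) ≤ p := by exact_mod_cast hp.two_le
    have hlt : ((p * m : ℤ) : WithTop ℤ) < (m : WithTop ℤ) := by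
      rw [WithTop.coe_lt_coe]
      nlinarith
    have hval : v (U ^ p - U) = ((p * m : ℤ) : WithTop ℤ) := by
      rw [sub_eq_add_neg, v.map_add_of_distinct_val
        (by rw [v.map_neg, hm, vpow]; exact hlt.ne), v.map_neg, hm, vpow]
      exact min_eq_left hlt.le
    rw [hval, WithTop.coe_inj] at vRHS
    have hd : (p : ℤ) ∣ -1 := ⟨m, vRHS.symm⟩
    rw [Int.dvd_neg] at hd
    have := Int.le_of_dvd one_pos hd
    omega
  · have hge : (((0 : ℤ)) : WithTop ℤ) ≤ v (U ^ p - U) := by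
      refine le_trans ?_ (v.map_sub _ _)
      rw [vpow, hm]
      refine le_min ?_ ?_ <;> rw [WithTop.coe_le_coe]
      · positivity
      · exact hpos
    rw [vRHS, WithTop.coe_le_coe] at hge
    omega
end

section
/- Let k be a field of characteristic p > 0, let K = k((t)) be the field of formal Laurent series over k, and let K(x) be the rational function field in one variable over K. Then there is no u ∈ K(x) with u^p − u = t/x. -/
private lemma nsmul_coe_withTop (n : ℕ) (a : ℤ) :
    n • (a : WithTop ℤ) = ((n * a : ℤ) : WithTop ℤ) := by
  induction n with
  | zero => simp
  | succ n ih =>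
    rw [succ_nsmul, ih, ← WithTop.coe_add]
    congr 1
    push_cast
    ring

open RatFunc in
private lemma coe_C' {F : Type*} [Field F] (a : F) :
    ((RatFunc.C a : RatFunc F) : LaurentSeries F) = HahnSeries.C a := by
  rw [← RatFunc.algebraMap_C,
    ← IsScalarTower.algebraMap_apply (Polynomial F) (RatFunc F) (LaurentSeries F)]
  simp [Polynomial.coe_C]

open RatFunc in
private lemma coe_inj' {F : Type*} [Field F] {w1 w2 : RatFunc F}
    (h : (w1 : LaurentSeries F) = w2) : w1 = w2 :=
  (algebraMap (RatFunc F) (LaurentSeries F)).injective h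

set_option maxHeartbeats 1600000 in
/-- Let `k` be a field of characteristic `p > 0`, `K = k((t))` the Laurent series field,
and `K(x)` the rational function field over `K`. Then the Artin–Schreier equation
`u ^ p - u = t/x` has no solution `u ∈ K(x)`. -/
theorem no_artinSchreier_root_ratFunc (p : ℕ) (hp : p.Prime)
    (k : Type*) [Field k] [CharP k p] :
    ¬ ∃ u : RatFunc (LaurentSeries k),
      u ^ p - u = RatFunc.C (HahnSeries.single 1 1 : LaurentSeries k) / RatFunc.X := by
  rintro ⟨u, hu⟩
  set F := LaurentSeries k with hF
  have ht : (HahnSeries.single 1 1 : F) ≠ 0 := HahnSeries.single_ne_zero one_ne_zero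
  set f : LaurentSeries F := (u : LaurentSeries F) with hf
  have h : f ^ p - f =
      (HahnSeries.C (HahnSeries.single 1 1 : F)) / HahnSeries.single 1 1 := by
    rw [hf, ← map_pow, ← map_sub, hu, map_div₀, coe_C',
      RatFunc.coe_X]
  set v := HahnSeries.addVal ℤ F with hv
  have hvC : v (HahnSeries.C (HahnSeries.single 1 1 : F)) = 0 := by
    rw [HahnSeries.addVal_apply_of_ne (HahnSeries.C_ne_zero ht), HahnSeries.C_apply,
      HahnSeries.order_single ht]
    rfl
  have hvX : v (HahnSeries.single 1 (1 : F)) = 1 := by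
    rw [HahnSeries.addVal_apply_of_ne (HahnSeries.single_ne_zero one_ne_zero),
      HahnSeries.order_single one_ne_zero]
    rfl
  have hCu : (RatFunc.C (HahnSeries.single 1 1 : F)) ≠ 0 := by
    simpa using RatFunc.C_injective.ne_iff' (map_zero RatFunc.C) |>.mpr ht
  have hune : u ^ p - u ≠ 0 := by
    rw [hu]
    exact div_ne_zero hCu RatFunc.X_ne_zero
  have hsne : f ^ p - f ≠ 0 := by
    rw [hf, ← map_pow, ← map_sub]
    intro h0
    exact hune (coe_inj' (by simpa using h0))
  have hmulu : (u ^ p - u) * RatFunc.X = RatFunc.C (HahnSeries.single 1 1 : F) := by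
    rw [hu, div_mul_cancel₀ _ RatFunc.X_ne_zero]
  have hmul : (f ^ p - f) * HahnSeries.single 1 1 =
      HahnSeries.C (HahnSeries.single 1 1 : F) := by
    have := congrArg (fun w : RatFunc F => (w : LaurentSeries F)) hmulu
    simpa only [map_mul, map_sub, map_pow, RatFunc.coe_X,
      coe_C', hf] using this
  have hrhs : v (f ^ p - f) = ((-1 : ℤ) : WithTop ℤ) := by
    have h4 := congrArg v hmul
    rw [v.map_mul, hvX, hvC, HahnSeries.addVal_apply_of_ne hsne] at h4
    rw [HahnSeries.addVal_apply_of_ne hsne]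
    have h5 : (f ^ p - f).order + 1 = 0 := by exact_mod_cast h4
    exact congrArg (fun z : ℤ => (z : WithTop ℤ)) (by omega : (f ^ p - f).order = -1)
  have hu0 : u ≠ 0 := by
    intro h0
    exact hune (by rw [h0, zero_pow hp.ne_zero, sub_zero])
  have hfne : f ≠ 0 := by
    rw [hf]
    intro h0
    exact hu0 (coe_inj' (by rw [h0, map_zero]))
  obtain ⟨d, hd⟩ : ∃ d : ℤ, f.order = d := ⟨_, rfl⟩
  have hvf : v f = (d : WithTop ℤ) := by
    rw [HahnSeries.addVal_apply_of_ne hfne, hd]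
  have hvfp : v (f ^ p) = ((p * d : ℤ) : WithTop ℤ) := by
    rw [AddValuation.map_pow, hvf, nsmul_coe_withTop]
  rcases le_or_gt 0 d with hd0 | hd0
  · have h1 : ((0 : ℤ) : WithTop ℤ) ≤ v (f ^ p - f) := by
      refine le_trans ?_ (AddValuation.map_sub v _ _)
      rw [hvfp, hvf, le_min_iff]
      constructor
      · exact_mod_cast mul_nonneg (by positivity) hd0
      · exact_mod_cast hd0
    rw [hrhs] at h1
    have : (0 : ℤ) ≤ -1 := by exact_mod_cast h1
    omega
  · have hp2 : (2 : ℤ) ≤ p := by exact_mod_cast hp.two_le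
    have hlt : v (f ^ p) < v f := by
      rw [hvfp, hvf]
      exact_mod_cast (by nlinarith : (p : ℤ) * d < d)
    have h2 : v (f ^ p - f) = ((p * d : ℤ) : WithTop ℤ) := by
      rw [AddValuation.map_sub_eq_of_lt_left v hlt, hvfp]
    rw [hrhs] at h2
    have h3 : (p : ℤ) * d = -1 := by exact_mod_cast h2.symm
    nlinarith
end

section
/- Let k be a field of characteristic p > 0, let K = k((t)), and let K((s)) be the field of formal Laurent series in a variable s over K. Then there is no u ∈ K((s)) with u^p − u = t/(1+s) + t/s. (Under the substitution x = 1 + s, this says that the Artin–Schreier equation Y^p − Y = t/x + t/(x−1) has no solution in K((x−1)).) -/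
open HahnSeries

lemma laurent_order_inv {K : Type*} [Field K] {x : LaurentSeries K} (hx : x ≠ 0) :
    (x⁻¹).order = -x.order := by
  have hinv : x⁻¹ ≠ 0 := inv_ne_zero hx
  have h := order_mul hx hinv
  rw [mul_inv_cancel₀ hx, order_one] at h
  linarith

set_option maxHeartbeats 1000000 in
/-- Let `k` be a field of characteristic `p > 0`, `K = k((t))`, and `K((s))` the Laurent
series field over `K` in a second variable `s`. Then the Artin–Schreier equation
`u ^ p - u = t/(1+s) + t/s` has no solution `u ∈ K((s))`. -/
theorem no_artinSchreier_root_laurent (p : ℕ) (hp : p.Prime)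
    (k : Type*) [Field k] [CharP k p] :
    ¬ ∃ u : LaurentSeries (LaurentSeries k),
      u ^ p - u =
        HahnSeries.C (HahnSeries.single 1 1 : LaurentSeries k) /
          (1 + (HahnSeries.single 1 1 : LaurentSeries (LaurentSeries k))) +
        HahnSeries.C (HahnSeries.single 1 1 : LaurentSeries k) /
          (HahnSeries.single 1 1 : LaurentSeries (LaurentSeries k)) := by
  set K := LaurentSeries k
  set t : K := HahnSeries.single 1 1 with ht_def
  have ht : t ≠ 0 := single_ne_zero one_ne_zero
  set s : LaurentSeries K := HahnSeries.single 1 1 with hs_def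
  have hs : s ≠ 0 := single_ne_zero one_ne_zero
  -- 1 + s is nonzero with order 0
  have h1s_coeff : (1 + s).coeff 0 = 1 := by
    rw [HahnSeries.coeff_add, coeff_one, hs_def, coeff_single_of_ne (by norm_num)]
    simp
  have h1s : (1 + s) ≠ 0 :=
    ne_zero_of_coeff_ne_zero (by rw [h1s_coeff]; exact one_ne_zero)
  have h1s_ord : (1 + s).order = 0 := by
    apply le_antisymm
    · exact order_le_of_coeff_ne_zero (by rw [h1s_coeff]; exact one_ne_zero)
    · by_contra hlt
      push_neg at hlt
      have hc := mt coeff_order_eq_zero.mp h1s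
      set n := (1 + s).order with hn
      have : (1 + s).coeff n = 0 := by
        rw [HahnSeries.coeff_add, coeff_one, if_neg hlt.ne, hs_def,
          coeff_single_of_ne (show n ≠ 1 by omega), add_zero]
      exact hc this
  -- the second summand is single (-1) t
  have hB : HahnSeries.C t / s = (HahnSeries.single (-1) t : LaurentSeries K) := by
    rw [div_eq_iff (G₀ := LaurentSeries K) hs, hs_def, single_mul_single, mul_one]
    norm_num
  -- the first summand has order 0
  set A : LaurentSeries K := HahnSeries.C t / (1 + s) with hA_def
  have hCt : (HahnSeries.C t : LaurentSeries K) ≠ 0 := C_ne_zero ht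
  have hAne : A ≠ 0 := div_ne_zero (G₀ := LaurentSeries K) hCt h1s
  have hA_ord : A.order = 0 := by
    rw [hA_def, div_eq_mul_inv (G := LaurentSeries K), order_mul hCt (inv_ne_zero (G₀ := LaurentSeries K) h1s), order_C,
      laurent_order_inv h1s, h1s_ord]
    ring
  set R : LaurentSeries K := A + HahnSeries.C t / s with hR_def
  -- coefficients of R
  have hRcoeff : ∀ i : ℤ, i < -1 → R.coeff i = 0 := by
    intro i hi
    rw [hR_def, HahnSeries.coeff_add, hB,
      coeff_single_of_ne (by omega),
      coeff_eq_zero_of_lt_order (by rw [hA_ord]; omega), add_zero]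
  have hRm1 : R.coeff (-1) ≠ 0 := by
    rw [hR_def, HahnSeries.coeff_add, hB, coeff_single_same,
      coeff_eq_zero_of_lt_order (by rw [hA_ord]; omega), zero_add]
    exact ht
  rintro ⟨u, hu⟩
  have hu0 : u ≠ 0 := by
    rintro rfl
    have hz : (0 : LaurentSeries (LaurentSeries k)) ^ p = 0 := zero_pow (M₀ := LaurentSeries (LaurentSeries k)) hp.ne_zero
    rw [hz, show (0 : LaurentSeries (LaurentSeries k)) - 0 = 0 from sub_zero (0 : LaurentSeries (LaurentSeries k))] at hu
    rw [← hu] at hRm1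
    exact hRm1 HahnSeries.coeff_zero
  have hup : u ^ p ≠ 0 := pow_ne_zero _ hu0
  have hord_pow : (u ^ p).order = (p : ℤ) * u.order := by
    rw [order_pow]; simp [zsmul_eq_mul]
  have hp2 : (2 : ℤ) ≤ (p : ℤ) := by exact_mod_cast hp.two_le
  rcases le_or_gt 0 u.order with hn | hn
  · -- order u ≥ 0 : coeff at -1 of LHS is 0
    have h1 : (u ^ p).coeff (-1) = 0 :=
      coeff_eq_zero_of_lt_order (by rw [hord_pow]; nlinarith)
    have h2 : u.coeff (-1) = 0 := coeff_eq_zero_of_lt_order (by omega)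
    apply hRm1
    rw [← hu, HahnSeries.coeff_sub, h1, h2, sub_zero]
  · -- order u < 0 : coeff at p * order u of LHS is nonzero, but p * order u < -1
    set m : ℤ := (p : ℤ) * u.order with hm_def
    have hm : m < -1 := by nlinarith
    have h1 : (u ^ p).coeff m ≠ 0 := by
      rw [← hord_pow]; exact mt coeff_order_eq_zero.mp hup
    have h2 : u.coeff m = 0 := coeff_eq_zero_of_lt_order (by nlinarith)
    apply h1
    have := hRcoeff m hm
    rw [← hu, HahnSeries.coeff_sub, h2, sub_zero] at this
    exact this
end

section
/- Let k be a field of characteristic p > 0, let K = k((t)), and let F be the field obtained from the rational function field K(x) by adjoining a root y of the irreducible Artin–Schreier polynomial Y^p − Y − (t/x + t/(x−1)) (so F = K(x)[Y]/(Y^p − Y − (t/x + t/(x−1))) is a degree-p field extension of K(x)). Then the polynomial P(Z) = Z^p − Z − t/x has no root in F. -/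
open Polynomial

section Laurent

variable {p : ℕ} {L : Type*} [Field L]

/-- No element of a Laurent series field satisfies `u^p - u = single (-1) s + w`
with `s ≠ 0` and `w` a power series. -/
theorem ls_no_AS_root (hp2 : 2 ≤ p) {u : LaurentSeries L} {s : L} (hs : s ≠ 0)
    (w : PowerSeries L) :
    u ^ p - u ≠ HahnSeries.single (-1) s + (w : LaurentSeries L) := by
  intro h
  have hcoeff : ∀ n : ℤ, n < 0 →
      (HahnSeries.single (-1 : ℤ) s + (w : LaurentSeries L)).coeff n
        = if n = -1 then s else 0 := by
    intro n hn
    rw [HahnSeries.coeff_add, PowerSeries.coeff_coe, if_pos hn]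
    split_ifs with h1
    · rw [h1, HahnSeries.coeff_single_same, add_zero]
    · rw [HahnSeries.coeff_single_of_ne h1, add_zero]
  by_cases hu : u = 0
  · have := congrArg (fun v => HahnSeries.coeff v (-1)) h
    simp only [hu, zero_pow (by omega : p ≠ 0), sub_zero, HahnSeries.coeff_zero] at this
    rw [hcoeff (-1) (by norm_num), if_pos rfl] at this
    exact hs this.symm
  · have hup : u ^ p ≠ 0 := pow_ne_zero _ hu
    by_cases ho : 0 ≤ u.order
    · have := congrArg (fun v => HahnSeries.coeff v (-1)) h
      have h1 : (u ^ p).coeff (-1) = 0 := by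
        apply HahnSeries.coeff_eq_zero_of_lt_order
        rw [HahnSeries.order_pow]
        have : (0 : ℤ) ≤ p • u.order := by
          rw [nsmul_eq_mul]
          positivity
        omega
      have h2 : u.coeff (-1) = 0 :=
        HahnSeries.coeff_eq_zero_of_lt_order (by omega)
      simp only [HahnSeries.coeff_sub, h1, h2, sub_zero] at this
      rw [hcoeff (-1) (by norm_num), if_pos rfl] at this
      exact hs this.symm
    · push_neg at ho
      set o : ℤ := u.order with ho'
      have hpo : (u ^ p).order = (p : ℤ) * o := by
        rw [HahnSeries.order_pow, nsmul_eq_mul]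
      have hlt : (p : ℤ) * o < o := by nlinarith [(by exact_mod_cast hp2 : (2:ℤ) ≤ (p:ℤ))]
      have hlt2 : (p : ℤ) * o < -1 := by
        nlinarith [(by exact_mod_cast hp2 : (2:ℤ) ≤ (p:ℤ))]
      have := congrArg (fun v => HahnSeries.coeff v ((p : ℤ) * o)) h
      have h1 : (u ^ p).coeff ((p : ℤ) * o) ≠ 0 := by
        rw [← hpo]; exact fun h0 => hup (HahnSeries.coeff_order_eq_zero.mp h0)
      have h2 : u.coeff ((p : ℤ) * o) = 0 :=
        HahnSeries.coeff_eq_zero_of_lt_order (by omega)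
      simp only [HahnSeries.coeff_sub, h2, sub_zero] at this
      rw [hcoeff _ (by omega), if_neg (by omega)] at this
      exact h1 this

end Laurent

section RatFuncEmbed

variable {L : Type*} [Field L]

/-- Evaluation of polynomials at `X + β` inside Laurent series. -/
noncomputable def psiEval (β : L) : L[X] →+* LaurentSeries L :=
  eval₂RingHom (HahnSeries.C : L →+* LaurentSeries L) (HahnSeries.single 1 1 + HahnSeries.C β)

theorem psiEval_eq (β : L) :
    psiEval β = ((HahnSeries.ofPowerSeries ℤ L).comp
        (Polynomial.coeToPowerSeries.ringHom)).comp
      ((Polynomial.aeval (X + C β) : L[X] →ₐ[L] L[X]) : L[X] →+* L[X]) := by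
  apply Polynomial.ringHom_ext
  · intro a
    simp [psiEval]
  · simp [psiEval]

theorem psiEval_injective (β : L) : Function.Injective (psiEval β) := by
  rw [psiEval_eq]
  have h1 : Function.Injective (HahnSeries.ofPowerSeries ℤ L) :=
    HahnSeries.ofPowerSeries_injective
  have h2 : Function.Injective (Polynomial.coeToPowerSeries.ringHom : L[X] →+* PowerSeries L) := by
    intro q q' hqq
    exact Polynomial.coe_inj.mp hqq
  have h3 : Function.Injective (Polynomial.aeval (X + C β) : L[X] →ₐ[L] L[X]) := by
    have key : (Polynomial.aeval (X - C β)).comp (Polynomial.aeval (X + C β) : L[X] →ₐ[L] L[X])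
        = AlgHom.id L L[X] := by
      apply Polynomial.algHom_ext
      simp
    intro q q' hqq
    have := congrArg (Polynomial.aeval (X - C β) : L[X] →ₐ[L] L[X]) hqq
    rwa [← AlgHom.comp_apply, ← AlgHom.comp_apply, key, AlgHom.id_apply, AlgHom.id_apply] at this
  exact (h1.comp h2).comp h3

theorem psiEval_mem_nzd (β : L) :
    (nonZeroDivisors L[X]) ≤ (nonZeroDivisors (LaurentSeries L)).comap (psiEval β) := by
  intro q hq
  simp only [Submonoid.mem_comap]
  rw [mem_nonZeroDivisors_iff_ne_zero]
  intro h0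
  have : q = 0 := psiEval_injective β (by simpa using h0)
  rw [this] at hq
  exact (mem_nonZeroDivisors_iff_ne_zero.mp hq) rfl

/-- Laurent series expansion of rational functions around `-β`. -/
noncomputable def phiEval (β : L) : RatFunc L →+* LaurentSeries L :=
  RatFunc.liftRingHom (psiEval β) (psiEval_mem_nzd β)

theorem phiEval_div (β γ κ : L) :
    phiEval β (RatFunc.C κ / (RatFunc.X - RatFunc.C γ)) =
      HahnSeries.C κ / (HahnSeries.single 1 1 + HahnSeries.C (β - γ)) := by
  rw [← RatFunc.algebraMap_C κ, ← RatFunc.algebraMap_C γ, ← RatFunc.algebraMap_X,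
    ← map_sub, phiEval, RatFunc.liftRingHom_apply_div]
  congr 1
  · simp [psiEval]
  · simp [psiEval, map_sub, add_sub_assoc, ← map_sub HahnSeries.C β γ]

theorem phiEval_div_X (β κ : L) :
    phiEval β (RatFunc.C κ / RatFunc.X) =
      HahnSeries.C κ / (HahnSeries.single 1 1 + HahnSeries.C β) := by
  have := phiEval_div β 0 κ
  simpa using this

theorem hahn_C_div_single (κ : L) :
    (HahnSeries.C κ : LaurentSeries L) / HahnSeries.single 1 1 = HahnSeries.single (-1) κ := by
  rw [div_eq_iff (HahnSeries.single_ne_zero one_ne_zero), HahnSeries.single_mul_single]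
  norm_num [HahnSeries.C_apply]

theorem hahn_C_div_unit (κ : L) {γ : L} (hγ : γ ≠ 0) :
    ∃ w : PowerSeries L,
      (HahnSeries.C κ : LaurentSeries L) / (HahnSeries.single 1 1 + HahnSeries.C γ)
        = (w : LaurentSeries L) := by
  have hunit : IsUnit (PowerSeries.X + PowerSeries.C γ) := by
    rw [PowerSeries.isUnit_iff_constantCoeff]
    simpa using hγ
  obtain ⟨V, hV⟩ := hunit
  refine ⟨PowerSeries.C κ * ↑V⁻¹, ?_⟩
  have himg : (HahnSeries.ofPowerSeries ℤ L) (PowerSeries.X + PowerSeries.C γ)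
      = HahnSeries.single 1 1 + HahnSeries.C γ := by
    rw [map_add, HahnSeries.ofPowerSeries_X, HahnSeries.ofPowerSeries_C]
  have hne : (HahnSeries.single 1 1 + HahnSeries.C γ : LaurentSeries L) ≠ 0 := by
    intro h0
    have h1 : (PowerSeries.X + PowerSeries.C γ) = 0 :=
      HahnSeries.ofPowerSeries_injective (by rw [himg, h0, map_zero])
    rw [h1] at hV
    exact (by simp : ¬ IsUnit (0 : PowerSeries L)) (hV ▸ V.isUnit)
  rw [div_eq_iff hne, ← himg, ← map_mul, ← hV, mul_assoc,
    (V.inv_mul : (↑V⁻¹ : PowerSeries L) * ↑V = 1), mul_one]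
  simp [HahnSeries.ofPowerSeries_C]

/-- Key valuation fact: `c^p - c = (m τ)/X + (n τ)/(X-1)` is impossible in `RatFunc L`
unless `m = n = 0`. -/
theorem ratfunc_no_AS {p : ℕ} (hp2 : 2 ≤ p) {τ m n : L} (hτ : τ ≠ 0)
    (hmn : m ≠ 0 ∨ n ≠ 0) (c : RatFunc L) :
    c ^ p - c ≠ RatFunc.C (m * τ) / RatFunc.X + RatFunc.C (n * τ) / (RatFunc.X - 1) := by
  have hX1 : (RatFunc.X - 1 : RatFunc L) = RatFunc.X - RatFunc.C 1 := by simp [map_one]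
  rcases hmn with hm | hn
  · intro h
    have h' := congrArg (phiEval (0 : L)) h
    rw [map_sub, map_pow, map_add, hX1, phiEval_div, phiEval_div_X] at h'
    rw [show (0 : L) - 1 = -1 by ring, map_zero, add_zero] at h'
    rw [hahn_C_div_single] at h'
    obtain ⟨w, hw⟩ := hahn_C_div_unit (L := L) (n * τ) (γ := (-1 : L)) (by norm_num)
    rw [hw] at h'
    exact ls_no_AS_root hp2 (mul_ne_zero hm hτ) w h'
  · intro h
    have h' := congrArg (phiEval (1 : L)) h
    rw [map_sub, map_pow, map_add, hX1, phiEval_div, phiEval_div_X] at h'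
    rw [sub_self, map_zero, add_zero] at h'
    rw [hahn_C_div_single] at h'
    obtain ⟨w, hw⟩ := hahn_C_div_unit (L := L) (m * τ) (γ := (1 : L)) one_ne_zero
    rw [hw] at h'
    rw [add_comm] at h'
    exact ls_no_AS_root hp2 (mul_ne_zero hn hτ) w h'

end RatFuncEmbed

section PrimeField

variable {p : ℕ}

/-- In a field of characteristic `p`, the solutions of `c ^ p = c` are exactly the
elements of the prime field. -/
theorem eq_cast_of_frob_fixed {L : Type*} [Field L] [CharP L p] (hp : p.Prime) {c : L}
    (h : c ^ p = c) : ∃ m : ZMod p, c = ZMod.castHom (dvd_refl p) L m := by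
  classical
  haveI : Fact p.Prime := ⟨hp⟩
  have h2p : 2 ≤ p := hp.two_le
  set ι := ZMod.castHom (dvd_refl p) L with hι
  set g : L[X] := X ^ p - X with hg
  have hg0 : g ≠ 0 := by
    intro h0
    have : g.coeff p = 0 := by rw [h0]; simp
    rw [hg, coeff_sub, coeff_X_pow, if_pos rfl, coeff_X, if_neg (by omega : ¬ 1 = p)] at this
    norm_num at this
  have hdeg : g.natDegree ≤ p := by
    refine (Polynomial.natDegree_sub_le _ _).trans ?_
    rw [Polynomial.natDegree_X_pow, Polynomial.natDegree_X]
    omega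
  have hroot : ∀ x : L, x ^ p = x → x ∈ g.roots := by
    intro x hx
    rw [mem_roots hg0]
    simp [hg, IsRoot, hx]
  set S : Finset L := Finset.univ.image ι with hS
  have hScard : S.card = p := by
    rw [hS, Finset.card_image_of_injective _ ι.injective, Finset.card_univ, ZMod.card]
  have hSsub : S ⊆ g.roots.toFinset := by
    intro x hx
    rw [hS, Finset.mem_image] at hx
    obtain ⟨m, -, rfl⟩ := hx
    rw [Multiset.mem_toFinset]
    apply hroot
    rw [← map_pow, ZMod.pow_card]
  have hcard2 : g.roots.toFinset.card ≤ p :=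
    le_trans (Multiset.toFinset_card_le _) ((Polynomial.card_roots' g).trans hdeg)
  have hSeq : S = g.roots.toFinset :=
    Finset.eq_of_subset_of_card_le hSsub (by omega)
  have hc : c ∈ g.roots.toFinset := Multiset.mem_toFinset.mpr (hroot c h)
  rw [← hSeq, hS, Finset.mem_image] at hc
  obtain ⟨m, -, hm⟩ := hc
  exact ⟨m, hm.symm⟩

end PrimeField

section Hasse

variable {R : Type*} [CommRing R]

theorem hasse_top (s : R[X]) (d : ℕ) (hd : s.natDegree ≤ d) :
    Polynomial.hasseDeriv d s = C (s.coeff d) := by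
  ext n
  rw [Polynomial.hasseDeriv_coeff, coeff_C]
  rcases Nat.eq_zero_or_pos n with rfl | hn
  · simp
  · rw [if_neg (by omega)]
    have : s.coeff (n + d) = 0 := Polynomial.coeff_eq_zero_of_natDegree_lt (by omega)
    rw [this, mul_zero]

theorem hasse_next (s : R[X]) (d : ℕ) (hd1 : 1 ≤ d) (hd : s.natDegree ≤ d) :
    Polynomial.hasseDeriv (d - 1) s = C (s.coeff (d - 1)) + C (d * s.coeff d) * X := by
  ext n
  rw [Polynomial.hasseDeriv_coeff, coeff_add, coeff_C, coeff_C_mul, coeff_X]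
  match n with
  | 0 =>
    rw [if_pos rfl, if_neg (by omega), mul_zero, add_zero, Nat.zero_add, Nat.choose_self,
      Nat.cast_one, one_mul]
  | 1 =>
    have h1 : 1 + (d - 1) = d := by omega
    have h2 : d.choose (d - 1) = d := by
      rw [Nat.choose_symm (by omega), Nat.choose_one_right]
    rw [if_neg (by omega), if_pos rfl, mul_one, zero_add, h1, h2]
  | (n + 2) =>
    rw [if_neg (by omega), if_neg (by omega), mul_zero, add_zero]
    have : s.coeff (n + 2 + (d - 1)) = 0 :=
      Polynomial.coeff_eq_zero_of_natDegree_lt (by omega)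
    rw [this, mul_zero]

end Hasse

set_option maxHeartbeats 1600000 in
set_option synthInstance.maxHeartbeats 400000 in
/-- Let `k` be a field of characteristic `p > 0`, `K = k((t))`, and let `F` be obtained
from the rational function field `K(x)` by adjoining a root of the (irreducible)
Artin–Schreier polynomial `Y ^ p - Y - (t/x + t/(x-1))`. Then the polynomial
`P(Z) = Z ^ p - Z - t/x` has no root in `F`. -/
theorem artinSchreier_no_root_in_adjoinRoot (p : ℕ) (hp : p.Prime)
    (k : Type*) [Field k] [CharP k p] :
    ¬ ∃ z : AdjoinRoot
        ((X ^ p - X -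
          C (RatFunc.C (HahnSeries.single 1 1 : LaurentSeries k) / RatFunc.X +
             RatFunc.C (HahnSeries.single 1 1 : LaurentSeries k) / (RatFunc.X - 1))) :
          Polynomial (RatFunc (LaurentSeries k))),
      z ^ p - z =
        AdjoinRoot.of _
          (RatFunc.C (HahnSeries.single 1 1 : LaurentSeries k) / RatFunc.X) := by
  intro hex
  haveI : Fact p.Prime := ⟨hp⟩
  have hp2 : 2 ≤ p := hp.two_le
  set K : Type _ := LaurentSeries k with hK
  set τ : K := HahnSeries.single 1 1 with hτdef
  have hτ : τ ≠ 0 := HahnSeries.single_ne_zero one_ne_zero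
  set R : Type _ := RatFunc K with hR
  haveI : CharP K p := charP_of_injective_ringHom (HahnSeries.C : k →+* K).injective p
  haveI : CharP R p := charP_of_injective_ringHom (RatFunc.C : K →+* R).injective p
  haveI : ExpChar R p := ExpChar.prime hp
  set aa : R := RatFunc.C τ / RatFunc.X with haa
  set bb : R := RatFunc.C τ / (RatFunc.X - 1) with hbb
  set u : R := aa + bb with hu
  set f : R[X] := X ^ p - X - C u with hfdef
  replace hex : ∃ z : AdjoinRoot f, z ^ p - z = AdjoinRoot.of f aa := hex
  obtain ⟨z, hz⟩ := hex
  -- basic facts about f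
  have hf : f = X ^ p - (X + C u) := by rw [hfdef]; ring
  have hmon : f.Monic := by
    rw [hf, show p = (p - 1) + 1 by omega]
    apply Polynomial.monic_X_pow_sub
    rw [Polynomial.degree_X_add_C]
    exact_mod_cast (by omega : 1 < p - 1 + 1)
  have hdeg : f.natDegree = p := by
    rw [hf]
    have h1 : ((X : R[X]) + C u).natDegree < (X ^ p : R[X]).natDegree := by
      rw [Polynomial.natDegree_X_add_C, Polynomial.natDegree_X_pow]; omega
    rw [Polynomial.natDegree_sub_eq_left_of_natDegree_lt h1, Polynomial.natDegree_X_pow]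
  have hf1 : f ≠ 1 := fun h0 => by
    rw [h0] at hdeg; rw [Polynomial.natDegree_one] at hdeg; omega
  -- get a polynomial representative
  obtain ⟨q, hq⟩ := AdjoinRoot.mk_surjective (g := f) z
  have h1 : AdjoinRoot.mk f (q ^ p - q - C aa) = 0 := by
    rw [map_sub, map_sub, map_pow, hq]
    have : AdjoinRoot.mk f (C aa) = AdjoinRoot.of f aa := rfl
    rw [this, hz, sub_self]
  have hdvd : f ∣ q ^ p - q - C aa := (AdjoinRoot.mk_eq_zero).mp h1
  set r : R[X] := q %ₘ f with hrdef
  have hrlt : r.natDegree < p := by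
    rw [← hdeg]; exact Polynomial.natDegree_modByMonic_lt q hmon hf1
  have hdvd2 : f ∣ r ^ p - r - C aa := by
    have h2 : f ∣ q - r := by
      rw [hrdef, Polynomial.modByMonic_eq_sub_mul_div q f]
      exact ⟨q /ₘ f, by ring⟩
    have h3 : f ∣ q ^ p - r ^ p := dvd_trans h2 (sub_dvd_pow_sub_pow q r p)
    have h4 : r ^ p - r - C aa = (q ^ p - q - C aa) - (q ^ p - r ^ p) + (q - r) := by ring
    rw [h4]; exact dvd_add (dvd_sub hdvd h3) h2
  set s : R[X] := Polynomial.map (frobenius R p) r with hsdef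
  have hsw : r ^ p = s.comp (X ^ p) := by
    rw [← Polynomial.map_frobenius_expand p r, Polynomial.map_expand, ← hsdef,
      Polynomial.expand_eq_comp_X_pow]
  have hdvd3 : f ∣ r ^ p - s.comp (X + C u) := by
    rw [hsw]
    have h5 : s.comp (X ^ p) - s.comp (X + C u)
        = (s.map C).eval (X ^ p) - (s.map C).eval (X + C u) := by
      rw [← Polynomial.eval₂_eq_eval_map, ← Polynomial.eval₂_eq_eval_map]; rfl
    rw [h5]
    have h6 := sub_dvd_eval_sub ((X : R[X]) ^ p) (X + C u) (s.map C)
    have h7 : (X : R[X]) ^ p - (X + C u) = f := hf.symm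
    rwa [h7] at h6
  set g : R[X] := s.comp (X + C u) - (r + C aa) with hgdef
  have hgdvd : f ∣ g := by
    have h8 : g = (r ^ p - r - C aa) - (r ^ p - s.comp (X + C u)) := by rw [hgdef]; ring
    rw [h8]; exact dvd_sub hdvd2 hdvd3
  have hsdeg : s.natDegree ≤ r.natDegree := Polynomial.natDegree_map_le
  have h5 : (s.comp (X + C u)).natDegree ≤ r.natDegree := by
    rw [Polynomial.natDegree_comp, Polynomial.natDegree_X_add_C, mul_one]
    exact hsdeg
  have h6 : (r + C aa).natDegree ≤ r.natDegree := by
    refine (Polynomial.natDegree_add_le _ _).trans ?_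
    simp [Polynomial.natDegree_C]
  have hgdeg : g.natDegree < p :=
    lt_of_le_of_lt ((Polynomial.natDegree_sub_le _ _).trans (max_le h5 h6)) hrlt
  have hg0 : g = 0 :=
    Polynomial.eq_zero_of_dvd_of_natDegree_lt hgdvd (by omega)
  have heq : Polynomial.taylor u s = r + C aa := by
    rw [Polynomial.taylor_apply]
    exact sub_eq_zero.mp hg0
  -- prime field casts
  set ι : ZMod p →+* R := ZMod.castHom (dvd_refl p) R with hιdef
  set ι' : ZMod p →+* K := ZMod.castHom (dvd_refl p) K with hι'def
  have hcast : ∀ e : ZMod p, ι e = RatFunc.C (ι' e) := fun e =>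
    RingHom.congr_fun (RingHom.ext_zmod ι ((RatFunc.C : K →+* R).comp ι')) e
  have hshape : ∀ (e1 e2 : ZMod p) (c : R), c ^ p - c = RatFunc.C (ι' e1) * aa + RatFunc.C (ι' e2) * bb →
      (e1 ≠ 0 ∨ e2 ≠ 0) → False := by
    intro e1 e2 c hc hne
    have hne' : ι' e1 ≠ 0 ∨ ι' e2 ≠ 0 := by
      rcases hne with h | h
      · exact Or.inl fun h0 => h (ι'.injective (by rw [h0, map_zero]))
      · exact Or.inr fun h0 => h (ι'.injective (by rw [h0, map_zero]))
    refine ratfunc_no_AS hp2 hτ hne' c ?_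
    rw [hc, haa, hbb, map_mul, map_mul, mul_div_assoc, mul_div_assoc]
  set d : ℕ := r.natDegree with hddef
  by_cases hd2 : 2 ≤ d
  · -- high degree coefficients die
    have hr0 : r ≠ 0 := fun h0 => by rw [h0] at hddef; simp at hddef; omega
    have htop : (r.coeff d) ^ p = r.coeff d := by
      have h := congrArg (fun g : R[X] => g.coeff d) heq
      simp only [Polynomial.taylor_coeff] at h
      rw [hasse_top s d hsdeg, Polynomial.eval_C, Polynomial.coeff_add,
        Polynomial.coeff_C, if_neg (by omega : ¬ d = 0), add_zero] at h
      rwa [hsdef, Polynomial.coeff_map, frobenius_def] at h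
    obtain ⟨m, hm⟩ := eq_cast_of_frob_fixed hp htop
    have hm0 : m ≠ 0 := by
      intro h0
      rw [h0, map_zero] at hm
      exact (Polynomial.leadingCoeff_ne_zero.mpr hr0) hm
    have hnext : (r.coeff (d - 1)) ^ p + (d : R) * (r.coeff d) ^ p * u = r.coeff (d - 1) := by
      have h := congrArg (fun g : R[X] => g.coeff (d - 1)) heq
      simp only [Polynomial.taylor_coeff] at h
      rw [hasse_next s d (by omega) hsdeg, Polynomial.eval_add, Polynomial.eval_C,
        Polynomial.eval_mul, Polynomial.eval_C, Polynomial.eval_X, Polynomial.coeff_add,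
        Polynomial.coeff_C, if_neg (by omega : ¬ d - 1 = 0), add_zero] at h
      rw [hsdef, Polynomial.coeff_map, Polynomial.coeff_map, frobenius_def, frobenius_def] at h
      linear_combination h
    have hmR : r.coeff d = RatFunc.C (ι' m) := by rw [hm]; exact hcast m
    have hmp : (RatFunc.C (ι' m) : R) ^ p = RatFunc.C (ι' m) := by
      rw [← map_pow, ← map_pow, ZMod.pow_card]
    set e : ZMod p := -((d : ZMod p) * m) with hedef
    have he0 : e ≠ 0 := by
      rw [hedef]
      refine neg_ne_zero.mpr (mul_ne_zero ?_ hm0)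
      rw [Ne, ZMod.natCast_eq_zero_iff]
      intro hdvd'
      have := Nat.le_of_dvd (by omega) hdvd'
      omega
    refine hshape e e (r.coeff (d - 1)) ?_ (Or.inl he0)
    have hE : RatFunc.C (ι' e) = -((d : R) * RatFunc.C (ι' m)) := by
      rw [hedef, map_neg, map_mul, map_natCast, map_neg, map_mul, map_natCast]
    rw [hE]
    rw [hmR, hmp] at hnext
    linear_combination hnext
  · -- linear case
    push_neg at hd2
    have hsd1 : s.natDegree ≤ 1 := hsdeg.trans (by omega)
    have htop : (r.coeff 1) ^ p = r.coeff 1 := by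
      have h := congrArg (fun g : R[X] => g.coeff 1) heq
      simp only [Polynomial.taylor_coeff] at h
      rw [hasse_top s 1 hsd1, Polynomial.eval_C, Polynomial.coeff_add,
        Polynomial.coeff_C, if_neg one_ne_zero, add_zero] at h
      rwa [hsdef, Polynomial.coeff_map, frobenius_def] at h
    obtain ⟨m, hm⟩ := eq_cast_of_frob_fixed hp htop
    have hzero : (r.coeff 0) ^ p + (r.coeff 1) ^ p * u = r.coeff 0 + aa := by
      have h := congrArg (fun g : R[X] => g.coeff 0) heq
      simp only [Polynomial.taylor_coeff_zero] at h
      rw [Polynomial.eq_X_add_C_of_natDegree_le_one hsd1] at h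
      simp only [Polynomial.eval_add, Polynomial.eval_mul, Polynomial.eval_C,
        Polynomial.eval_X, Polynomial.coeff_add, Polynomial.coeff_C_zero] at h
      rw [hsdef, Polynomial.coeff_map, Polynomial.coeff_map, frobenius_def, frobenius_def] at h
      linear_combination h
    have hmR : r.coeff 1 = RatFunc.C (ι' m) := by rw [hm]; exact hcast m
    have hmp : (RatFunc.C (ι' m) : R) ^ p = RatFunc.C (ι' m) := by
      rw [← map_pow, ← map_pow, ZMod.pow_card]
    have hne : (1 - m ≠ 0) ∨ (-m ≠ 0) := by
      by_contra hcon
      push_neg at hcon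
      obtain ⟨ha', hb'⟩ := hcon
      rw [neg_eq_zero] at hb'
      rw [hb', sub_zero] at ha'
      exact one_ne_zero ha'
    refine hshape (1 - m) (-m) (r.coeff 0) ?_ hne
    have hE1 : RatFunc.C (ι' (1 - m)) = 1 - RatFunc.C (ι' m) := by
      rw [map_sub, map_one, map_sub, map_one]
    have hE2 : RatFunc.C (ι' (-m)) = -RatFunc.C (ι' m) := by
      rw [map_neg, map_neg]
    rw [hE1, hE2]
    rw [hmR, hmp] at hzero
    have huu : u = aa + bb := hu
    linear_combination hzero
end
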